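/- arXiv:2601.00979 — 2 statements merged into one kernel-verified Lean document; each statement's English description precedes it below -/
import Mathlib

section
/- For all integers n ≥ 2 and 1 ≤ k ≤ n/2, one has n·Ψ(k/n) = 2·S(n,k); that is, the value of Ψ at the rational point k/n equals twice the sum of the remainders in the Euclidean algorithm for (n,k), divided by n. -/
/-- `T(x) = x·(1 + {1/x})` for `x ≠ 0`, `T(0) = 0`. -/
noncomputable def Tmap (x : ℝ) : ℝ := if x = 0 then 0 else x * (1 + Int.fract (1 / x))

/-- `I(x) = {1/x} / (1 + {1/x})` for `x ≠ 0`, `I(0) = 0`. -/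
noncomputable def Imap (x : ℝ) : ℝ :=
  if x = 0 then 0 else Int.fract (1 / x) / (1 + Int.fract (1 / x))

/-- `Ψ(x) = 2x + 2·Σ_{j ≥ 1} T(x)·T(I(x))·⋯·T(I^{j-1}(x))·I^{j}(x)`. -/
noncomputable def Psi (x : ℝ) : ℝ :=
  2 * x + 2 * ∑' j : ℕ, (∏ i ∈ Finset.range (j + 1), Tmap (Imap^[i] x)) * Imap^[j + 1] x

/-- Sum of remainders in the Euclidean algorithm applied to `(n, k)`. -/
def euclidRemainderSum : ℕ → ℕ → ℕ
  | _, 0 => 0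
  | n, (k+1) => (k+1) + euclidRemainderSum (k+1) (n % (k+1))
  termination_by n k => k
  decreasing_by exact Nat.mod_lt _ (Nat.succ_pos k)

lemma fract_div_nat (v u : ℕ) (hu : 0 < u) :
    Int.fract ((v:ℝ)/u) = ((v % u : ℕ):ℝ)/u := by
  have hu' : (0:ℝ) < u := by exact_mod_cast hu
  have hnat : (v:ℝ) = ((v % u : ℕ):ℝ) + ((v / u : ℕ):ℝ) * u := by
    exact_mod_cast (Nat.mod_add_div' v u).symm
  have harg : ((v:ℕ):ℝ)/u = ((v % u : ℕ):ℝ)/u + ((v / u : ℕ):ℝ) := by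
    rw [hnat, add_div, mul_div_cancel_right₀ _ hu'.ne']
  rw [harg, Int.fract_add_natCast]
  refine Int.fract_eq_self.mpr ⟨div_nonneg (by positivity) hu'.le, ?_⟩
  rw [div_lt_one hu']
  exact_mod_cast Nat.mod_lt v hu

def estep (a b : ℕ) : ℕ := if b = 0 then 0 else a % b

lemma keyT (a b : ℕ) :
    Tmap ((b:ℝ)/((a:ℝ)+b)) = ((b + estep a b : ℕ):ℝ)/((a:ℝ)+b) := by
  rcases Nat.eq_zero_or_pos b with hb | hb
  · subst hb; simp [Tmap, estep]
  have hb' : (0:ℝ) < b := by exact_mod_cast hb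
  have hab : (0:ℝ) < (a:ℝ)+b := by positivity
  have hx : (b:ℝ)/((a:ℝ)+b) ≠ 0 := by positivity
  rw [Tmap, if_neg hx, one_div, inv_div]
  have h2 : ((a:ℝ)+b)/b = (((a+b:ℕ)):ℝ)/(b:ℕ) := by push_cast; ring
  rw [h2, fract_div_nat _ _ hb, Nat.add_mod_right a b, estep, if_neg hb.ne']
  push_cast
  field_simp

lemma keyI (a b : ℕ) :
    Imap ((b:ℝ)/((a:ℝ)+b)) = ((estep a b : ℕ):ℝ)/((b:ℝ)+(estep a b : ℕ)) := by
  rcases Nat.eq_zero_or_pos b with hb | hb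
  · subst hb; simp [Imap, estep]
  have hb' : (0:ℝ) < b := by exact_mod_cast hb
  have hab : (0:ℝ) < (a:ℝ)+b := by positivity
  have hx : (b:ℝ)/((a:ℝ)+b) ≠ 0 := by positivity
  rw [Imap, if_neg hx, one_div, inv_div]
  have h2 : ((a:ℝ)+b)/b = (((a+b:ℕ)):ℝ)/(b:ℕ) := by push_cast; ring
  rw [h2, fract_div_nat _ _ hb, Nat.add_mod_right a b, estep, if_neg hb.ne']
  have hm : (0:ℝ) ≤ ((a % b : ℕ):ℝ) := by positivity
  have hd : (0:ℝ) < (b:ℝ) + ((a % b : ℕ):ℝ) := by positivity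
  field_simp

def rseq (a b : ℕ) : ℕ → ℕ
  | 0 => a
  | (j+1) => rseq b (estep a b) j

lemma rseq_zero (a b : ℕ) : rseq a b 0 = a := rfl
lemma rseq_succ (a b j : ℕ) : rseq a b (j+1) = rseq b (estep a b) j := rfl
lemma rseq_one (a b : ℕ) : rseq a b 1 = b := rfl

lemma rseq_rec (j : ℕ) : ∀ a b : ℕ,
    rseq a b (j+2) = estep (rseq a b j) (rseq a b (j+1)) := by
  induction j with
  | zero => intro a b; rfl
  | succ j ih =>
      intro a b
      rw [rseq_succ a b (j+2), ih b (estep a b), ← rseq_succ, ← rseq_succ]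

lemma estep_zero (a : ℕ) : estep a 0 = 0 := rfl

lemma rseq_dec (a b : ℕ) : ∀ j, rseq a b (j+1) ≤ b - j := by
  intro j
  induction j with
  | zero => simp [rseq_one]
  | succ j ih =>
      rcases Nat.eq_zero_or_pos (rseq a b (j+1)) with h | h
      · rw [rseq_rec, h, estep_zero]; omega
      · rw [rseq_rec]
        have : estep (rseq a b j) (rseq a b (j+1)) < rseq a b (j+1) := by
          rw [estep, if_neg h.ne']; exact Nat.mod_lt _ h
        omega

lemma euclid_eq_sum : ∀ N, ∀ a b : ℕ, b ≤ N →
    (euclidRemainderSum a b : ℕ) = ∑ j ∈ Finset.range N, rseq a b (j+1) := by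
  intro N
  induction N with
  | zero =>
      intro a b hb
      interval_cases b
      simp [euclidRemainderSum]
  | succ N ih =>
      intro a b hb
      match b with
      | 0 =>
          have hz : ∀ j, rseq a 0 (j+1) = 0 := by
            intro j
            rw [rseq_succ, estep_zero]
            clear hb ih
            induction j generalizing a with
            | zero => rfl
            | succ j ih2 => rw [rseq_succ]; simpa [estep] using ih2 0
          simp [euclidRemainderSum, hz]
      | (m+1) =>
          rw [show euclidRemainderSum a (m+1) = (m+1) + euclidRemainderSum (m+1) (a % (m+1))
                by rw [euclidRemainderSum],
             Finset.sum_range_succ']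
          have h1 : ∀ j, rseq a (m+1) (j+1+1) = rseq (m+1) (a % (m+1)) (j+1) := by
            intro j; rw [rseq_succ a, estep, if_neg (Nat.succ_ne_zero m)]
          simp only [h1, zero_add, rseq_zero, rseq_one]
          rw [← ih (m+1) (a % (m+1)) (by have := Nat.mod_lt a (show 0 < m+1 by omega); omega)]
          omega

theorem stmt_14 :
    ∀ n k : ℕ, 2 ≤ n → 1 ≤ k → 2 * k ≤ n →
      (n : ℝ) * Psi ((k : ℝ) / n) = 2 * (euclidRemainderSum n k : ℝ) := by
  intro n k hn hk hkn
  have hkn' : k ≤ n := by omega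
  set a := n - k with ha
  have hab : a + k = n := by omega
  have hn' : (0:ℝ) < n := by exact_mod_cast (by omega : 0 < n)
  set x := (k:ℝ)/n with hx
  have habR : (a:ℝ) + k = n := by exact_mod_cast hab
  -- iterates of Imap
  have hC : ∀ j, Imap^[j] x = ((rseq a k (j+1) : ℕ):ℝ)
      / (((rseq a k j : ℕ):ℝ) + ((rseq a k (j+1) : ℕ):ℝ)) := by
    intro j
    induction j with
    | zero =>
        rw [Function.iterate_zero_apply, hx, rseq_zero, rseq_one, habR]
    | succ j ih =>
        rw [Function.iterate_succ_apply', ih, keyI, ← rseq_rec]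
  -- partial products
  have hP : ∀ j, (∏ i ∈ Finset.range (j+1), Tmap (Imap^[i] x))
      = ((rseq a k (j+1) + rseq a k (j+2) : ℕ):ℝ) / (n:ℝ) := by
    intro j
    induction j with
    | zero =>
        rw [Finset.prod_range_one, hC 0, keyT, ← rseq_rec, rseq_zero, rseq_one, habR]
    | succ j ih =>
        rw [Finset.prod_range_succ, ih, hC (j+1), keyT, ← rseq_rec]
        rcases Nat.eq_zero_or_pos (rseq a k (j+1) + rseq a k (j+2)) with h0 | h0
        · have h1 : rseq a k (j+1) = 0 := by omega
          have h2 : rseq a k (j+2) = 0 := by omega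
          have h3 : rseq a k (j+3) = 0 := by
            rw [show j+3 = (j+1)+2 from rfl, rseq_rec, h2, estep_zero]
          rw [h1, h2]
          rw [show j+1+2 = j+3 from rfl, h3]
          norm_num
        · have hd : (0:ℝ) < ((rseq a k (j+1):ℕ):ℝ) + ((rseq a k (j+2):ℕ):ℝ) := by
            have : (0:ℝ) < ((rseq a k (j+1) + rseq a k (j+2) : ℕ):ℝ) := by
              exact_mod_cast h0
            push_cast at this ⊢; linarith
          push_cast
          field_simp
  -- individual terms of the series
  have hterm : ∀ j, (∏ i ∈ Finset.range (j+1), Tmap (Imap^[i] x)) * Imap^[j+1] x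
      = ((rseq a k (j+2) : ℕ):ℝ)/n := by
    intro j
    rw [hP j, hC (j+1)]
    rcases Nat.eq_zero_or_pos (rseq a k (j+1) + rseq a k (j+2)) with h0 | h0
    · have h1 : rseq a k (j+1) = 0 := by omega
      have h2 : rseq a k (j+2) = 0 := by omega
      rw [h1, h2]; norm_num
    · have hd : (0:ℝ) < ((rseq a k (j+1):ℕ):ℝ) + ((rseq a k (j+2):ℕ):ℝ) := by
        have : (0:ℝ) < ((rseq a k (j+1) + rseq a k (j+2) : ℕ):ℝ) := by exact_mod_cast h0
        push_cast at this ⊢; linarith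
      push_cast
      field_simp
  -- vanishing of the tail
  have hzero : ∀ j, k ≤ j → rseq a k (j+2) = 0 := by
    intro j hj
    have h : rseq a k (j+2) ≤ k - (j+1) := rseq_dec a k (j+1)
    omega
  -- compute the tsum
  have hT : (∑' j : ℕ, (∏ i ∈ Finset.range (j + 1), Tmap (Imap^[i] x)) * Imap^[j + 1] x)
      = ∑ j ∈ Finset.range k, ((rseq a k (j+2) : ℕ):ℝ)/n := by
    rw [tsum_congr hterm]
    refine tsum_eq_sum ?_
    intro j hj
    rw [hzero j (by simpa using hj)]
    norm_num
  -- euclid sum identity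
  have hE : euclidRemainderSum n k = k + ∑ j ∈ Finset.range k, rseq a k (j+2) := by
    have h0 : euclidRemainderSum n k = euclidRemainderSum a k := by
      match k, hk with
      | (m+1), _ =>
          rw [euclidRemainderSum, euclidRemainderSum,
            show n % (m+1) = a % (m+1) by rw [← hab, Nat.add_mod_right]]
    rw [h0, euclid_eq_sum (k+1) a k (by omega), Finset.sum_range_succ']
    simp only [zero_add, rseq_one, show ∀ j, j+1+1 = j+2 from fun _ => rfl]
    omega
  -- conclude
  rw [Psi, hT, ← Finset.sum_div]
  have hEr : ((euclidRemainderSum n k : ℕ):ℝ)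
      = (k:ℝ) + ((∑ j ∈ Finset.range k, rseq a k (j+2) : ℕ):ℝ) := by
    exact_mod_cast congrArg (Nat.cast (R := ℝ)) hE
  rw [hEr]
  push_cast
  rw [hx]
  field_simp
end

section
/- For every integer n ≥ 2, the exact identity Σ_{1 ≤ k ≤ n/2} S(n,k) = Σ_{(x, x', y, y')} x' + Σ_{1 ≤ k ≤ n/2} gcd(n,k) holds, where the middle sum runs over all quadruples of positive integers (x, x', y, y') with x > y ≥ 1, x' > y' ≥ 1, gcd(x,y) = 1, and n = x·x' + y·y'. -/
def quads (x y a b : ℕ) : List (ℕ × ℕ × ℕ × ℕ) :=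
  if h : b = 0 ∨ a % b = 0 then []
  else (x * (a / b) + y, b, x, a % b) :: quads (x * (a / b) + y) x b (a % b)
  termination_by b
  decreasing_by
    push_neg at h
    exact Nat.mod_lt _ (Nat.pos_of_ne_zero h.1)

def backk (x y a b : ℕ) : ℕ :=
  if h : y = 0 then b else backk y (x % y) ((x / y) * a + b) a
  termination_by y
  decreasing_by exact Nat.mod_lt _ (Nat.pos_of_ne_zero h)

lemma quads_nil {x y a b : ℕ} (h : b = 0 ∨ a % b = 0) : quads x y a b = [] := by
  rw [quads, dif_pos h]

lemma quads_cons {x y a b : ℕ} (hb : b ≠ 0) (hr : a % b ≠ 0) :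
    quads x y a b =
      (x * (a / b) + y, b, x, a % b) :: quads (x * (a / b) + y) x b (a % b) := by
  rw [quads, dif_neg (by push_neg; exact ⟨hb, hr⟩)]

lemma backk_zero {x a b : ℕ} : backk x 0 a b = b := by rw [backk]; simp

lemma backk_succ {x y a b : ℕ} (hy : y ≠ 0) :
    backk x y a b = backk y (x % y) ((x / y) * a + b) a := by
  rw [backk, dif_neg hy]

lemma ers_eq (a b : ℕ) (hb : b ≠ 0) :
    euclidRemainderSum a b = b + euclidRemainderSum b (a % b) := by
  obtain ⟨k, rfl⟩ := Nat.exists_eq_succ_of_ne_zero hb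
  rw [euclidRemainderSum]

lemma sum_quads : ∀ b a x y : ℕ, b ≠ 0 →
    ((quads x y a b).map (fun q => q.2.1)).sum + Nat.gcd a b = euclidRemainderSum a b := by
  intro b
  induction b using Nat.strong_induction_on with
  | _ b ih =>
    intro a x y hb
    rw [ers_eq a b hb]
    by_cases hr : a % b = 0
    · rw [quads_nil (Or.inr hr), hr]
      simp [Nat.gcd_comm a b, Nat.gcd_rec b a, hr, euclidRemainderSum]
    · rw [quads_cons hb hr]
      simp only [List.map_cons, List.sum_cons]
      have := ih (a % b) (Nat.mod_lt _ (Nat.pos_of_ne_zero hb)) b (x * (a / b) + y) x hr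
      have hg : Nat.gcd a b = Nat.gcd b (a % b) := by
        rw [Nat.gcd_comm a b, Nat.gcd_rec b a, Nat.gcd_comm]
      omega

lemma mem_quads_le : ∀ b a x y : ℕ, ∀ q ∈ quads x y a b, q.2.1 ≤ b := by
  intro b
  induction b using Nat.strong_induction_on with
  | _ b ih =>
    intro a x y q hq
    by_cases hb : b = 0
    · rw [quads_nil (Or.inl hb)] at hq; simp at hq
    by_cases hr : a % b = 0
    · rw [quads_nil (Or.inr hr)] at hq; simp at hq
    rw [quads_cons hb hr] at hq
    rcases List.mem_cons.mp hq with h | h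
    · subst h; rfl
    · exact le_trans (ih (a % b) (Nat.mod_lt _ (Nat.pos_of_ne_zero hb)) b _ x q h)
        (le_of_lt (Nat.mod_lt _ (Nat.pos_of_ne_zero hb)))

lemma nodup_quads : ∀ b a x y : ℕ, (quads x y a b).Nodup := by
  intro b
  induction b using Nat.strong_induction_on with
  | _ b ih =>
    intro a x y
    by_cases hb : b = 0
    · rw [quads_nil (Or.inl hb)]; exact List.nodup_nil
    by_cases hr : a % b = 0
    · rw [quads_nil (Or.inr hr)]; exact List.nodup_nil
    rw [quads_cons hb hr]
    refine List.nodup_cons.mpr ⟨fun hmem => ?_,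
      ih (a % b) (Nat.mod_lt _ (Nat.pos_of_ne_zero hb)) b _ x⟩
    have h1 := mem_quads_le (a % b) b (x * (a / b) + y) x _ hmem
    have h2 : a % b < b := Nat.mod_lt _ (Nat.pos_of_ne_zero hb)
    simp only at h1
    omega

/-- The starting `k` reconstructed from a quadruple. -/
def kOf (q : ℕ × ℕ × ℕ × ℕ) : ℕ :=
  backk q.2.2.1 (q.1 % q.2.2.1) ((q.1 / q.2.2.1) * q.2.1 + q.2.2.2) q.2.1

lemma qdiv_helper {x y q : ℕ} (hyx : y < x) : (x * q + y) / x = q := by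
  rw [mul_comm, add_comm, Nat.add_mul_div_right _ _ (show 0 < x by omega),
    Nat.div_eq_of_lt hyx, zero_add]

lemma qmod_helper {x y q : ℕ} (hyx : y < x) : (x * q + y) % x = y := by
  rw [mul_comm, add_comm, Nat.add_mul_mod_self_right, Nat.mod_eq_of_lt hyx]

lemma kOf_eq : ∀ b a x y : ℕ, y < x → b ≠ 0 → b < a → (1 ≤ y ∨ 2 * b ≤ a) →
    ∀ q ∈ quads x y a b, kOf q = backk x y a b := by
  intro b
  induction b using Nat.strong_induction_on with
  | _ b ih =>
    intro a x y hyx hb hba h5 q hq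
    by_cases hr : a % b = 0
    · rw [quads_nil (Or.inr hr)] at hq; simp at hq
    rw [quads_cons hb hr] at hq
    have hq1 : 1 ≤ a / b := Nat.one_le_div_iff (Nat.pos_of_ne_zero hb) |>.mpr (le_of_lt hba)
    have hX : x < x * (a / b) + y := by
      rcases h5 with h5 | h5
      · nlinarith [show 1 ≤ x by omega]
      · have : 2 ≤ a / b := Nat.le_div_iff_mul_le (Nat.pos_of_ne_zero hb) |>.mpr (by omega)
        nlinarith [show 1 ≤ x by omega]
    have hdiv : (x * (a / b) + y) / x = a / b := qdiv_helper hyx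
    have hmod : (x * (a / b) + y) % x = y := qmod_helper hyx
    rcases List.mem_cons.mp hq with h | h
    · subst h
      show backk x ((x * (a / b) + y) % x) (((x * (a / b) + y) / x) * b + a % b) b
          = backk x y a b
      rw [hdiv, hmod, mul_comm (a / b) b, Nat.div_add_mod]
    · have hrec := ih (a % b) (Nat.mod_lt _ (Nat.pos_of_ne_zero hb)) b (x * (a / b) + y) x
        hX hr (Nat.mod_lt _ (Nat.pos_of_ne_zero hb)) (Or.inl (by omega)) q h
      rw [hrec, backk_succ (show x ≠ 0 by omega), hdiv, hmod, mul_comm (a / b) b,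
        Nat.div_add_mod]

lemma backk_init {n k : ℕ} : backk 1 0 n k = k := backk_zero

def Pred (n : ℕ) (q : ℕ × ℕ × ℕ × ℕ) : Prop :=
  q.2.2.1 < q.1 ∧ 1 ≤ q.2.2.1 ∧ q.2.2.2 < q.2.1 ∧ 1 ≤ q.2.2.2 ∧
    Nat.gcd q.1 q.2.2.1 = 1 ∧ n = q.1 * q.2.1 + q.2.2.1 * q.2.2.2

lemma gcd_step {x y c : ℕ} : Nat.gcd (x * c + y) x = Nat.gcd x y := by
  rw [add_comm, Nat.gcd_add_mul_left_left, Nat.gcd_comm]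

lemma pred_of_mem : ∀ b a x y : ℕ, Nat.gcd x y = 1 → y < x → b ≠ 0 → b < a →
    (1 ≤ y ∨ 2 * b ≤ a) → ∀ q ∈ quads x y a b, Pred (x * a + y * b) q := by
  intro b
  induction b using Nat.strong_induction_on with
  | _ b ih =>
    intro a x y hg hyx hb hba h5 q hq
    by_cases hr : a % b = 0
    · rw [quads_nil (Or.inr hr)] at hq; simp at hq
    rw [quads_cons hb hr] at hq
    have hq1 : 1 ≤ a / b := Nat.one_le_div_iff (Nat.pos_of_ne_zero hb) |>.mpr (le_of_lt hba)
    have hX : x < x * (a / b) + y := by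
      rcases h5 with h5 | h5
      · nlinarith [show 1 ≤ x by omega]
      · have : 2 ≤ a / b := Nat.le_div_iff_mul_le (Nat.pos_of_ne_zero hb) |>.mpr (by omega)
        nlinarith [show 1 ≤ x by omega]
    have hdm : b * (a / b) + a % b = a := Nat.div_add_mod a b
    have hn : (x * (a / b) + y) * b + x * (a % b) = x * a + y * b := by
      calc (x * (a / b) + y) * b + x * (a % b)
          = x * (b * (a / b) + a % b) + y * b := by ring
        _ = x * a + y * b := by rw [hdm]
    rcases List.mem_cons.mp hq with h | h
    · subst h
      simp only [Pred]
      exact ⟨hX, by omega, Nat.mod_lt _ (Nat.pos_of_ne_zero hb), by omega, gcd_step.trans hg,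
        hn.symm⟩
    · have := ih (a % b) (Nat.mod_lt _ (Nat.pos_of_ne_zero hb)) b (x * (a / b) + y) x
        (gcd_step.trans hg) hX hr (Nat.mod_lt _ (Nat.pos_of_ne_zero hb)) (Or.inl (by omega)) q h
      rwa [hn] at this

lemma reach : ∀ x y a b : ℕ, Nat.gcd x y = 1 → y < x → b ≠ 0 → b < a →
    (1 ≤ y ∨ 2 * b ≤ a) →
    ∃ k, 1 ≤ k ∧ 2 * k ≤ x * a + y * b ∧
      ∀ q ∈ quads x y a b, q ∈ quads 1 0 (x * a + y * b) k := by
  intro x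
  induction x using Nat.strong_induction_on with
  | _ x ih =>
    intro y a b hg hyx hb hba h5
    by_cases hy : y = 0
    · subst hy
      have hx1 : x = 1 := by simpa using hg
      subst hx1
      exact ⟨b, by omega, by simpa using h5.resolve_left (by omega),
        fun q hq => by simpa using hq⟩
    · have hy1 : 1 ≤ y := by omega
      have hxq : 1 ≤ x / y := Nat.one_le_div_iff (by omega) |>.mpr (le_of_lt hyx)
      have hgp : Nat.gcd y (x % y) = 1 := by
        have h1 : Nat.gcd y x = 1 := by rw [Nat.gcd_comm]; exact hg
        rw [Nat.gcd_rec y x] at h1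
        rw [Nat.gcd_comm]; exact h1
      have hmlt : x % y < y := Nat.mod_lt _ (by omega)
      have haA : a ≤ (x / y) * a := Nat.le_mul_of_pos_left a hxq
      have h5p : 1 ≤ x % y ∨ 2 * a ≤ (x / y) * a + b := by
        by_cases hmy : x % y = 0
        · right
          have hdvd : y ∣ x := Nat.dvd_of_mod_eq_zero hmy
          have hyone : y = 1 := by have := Nat.gcd_eq_right hdvd; omega
          have h2x : 2 ≤ x / y := by rw [hyone]; simpa using (show 2 ≤ x by omega)
          nlinarith
        · left; omega
      obtain ⟨k, hk1, hk2, hksub⟩ := ih y hyx (x % y) ((x / y) * a + b) a hgp hmlt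
        (by omega) (by omega) h5p
      have hdm : y * (x / y) + x % y = x := Nat.div_add_mod x y
      have hnp : y * ((x / y) * a + b) + (x % y) * a = x * a + y * b := by
        calc y * ((x / y) * a + b) + (x % y) * a
            = (y * (x / y) + x % y) * a + y * b := by ring
          _ = x * a + y * b := by rw [hdm]
      rw [hnp] at hk2 hksub
      refine ⟨k, hk1, hk2, fun q hq => hksub q ?_⟩
      have hmod : ((x / y) * a + b) % a = b := by
        rw [add_comm, Nat.add_mul_mod_self_right, Nat.mod_eq_of_lt hba]
      have hdiv : ((x / y) * a + b) / a = x / y := by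
        rw [mul_comm, Nat.mul_add_div (by omega), Nat.div_eq_of_lt hba, add_zero]
      rw [quads_cons (show a ≠ 0 by omega) (by rw [hmod]; exact hb), hmod, hdiv, hdm]
      exact List.mem_cons_of_mem _ hq

lemma surj {n X x' Y y' : ℕ} (h : Pred n (X, x', Y, y')) :
    ∃ k, 1 ≤ k ∧ 2 * k ≤ n ∧ (X, x', Y, y') ∈ quads 1 0 n k := by
  obtain ⟨h1, h2, h3, h4, h5, h6⟩ := h
  simp only at h1 h2 h3 h4 h5 h6
  have hxq : 1 ≤ X / Y := Nat.one_le_div_iff (by omega) |>.mpr (le_of_lt h1)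
  have hgp : Nat.gcd Y (X % Y) = 1 := by
    have hh : Nat.gcd Y X = 1 := by rw [Nat.gcd_comm]; exact h5
    rw [Nat.gcd_rec Y X] at hh
    rw [Nat.gcd_comm]; exact hh
  have hmlt : X % Y < Y := Nat.mod_lt _ (by omega)
  have haA : x' ≤ (X / Y) * x' := Nat.le_mul_of_pos_left x' hxq
  have h5p : 1 ≤ X % Y ∨ 2 * x' ≤ (X / Y) * x' + y' := by
    by_cases hmy : X % Y = 0
    · right
      have hdvd : Y ∣ X := Nat.dvd_of_mod_eq_zero hmy
      have hyone : Y = 1 := by have := Nat.gcd_eq_right hdvd; omega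
      have h2x : 2 ≤ X / Y := by rw [hyone]; simpa using (show 2 ≤ X by omega)
      nlinarith
    · left; omega
  obtain ⟨k, hk1, hk2, hksub⟩ := reach Y (X % Y) ((X / Y) * x' + y') x' hgp hmlt
    (by omega) (by omega) h5p
  have hdm : Y * (X / Y) + X % Y = X := Nat.div_add_mod X Y
  have hnp : Y * ((X / Y) * x' + y') + (X % Y) * x' = n := by
    calc Y * ((X / Y) * x' + y') + (X % Y) * x'
        = (Y * (X / Y) + X % Y) * x' + Y * y' := by ring
      _ = n := by rw [hdm, h6]
  rw [hnp] at hk2 hksub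
  refine ⟨k, hk1, hk2, hksub _ ?_⟩
  have hmod : ((X / Y) * x' + y') % x' = y' := by
    rw [add_comm, Nat.add_mul_mod_self_right, Nat.mod_eq_of_lt h3]
  have hdiv : ((X / Y) * x' + y') / x' = X / Y := by
    rw [mul_comm, Nat.mul_add_div (by omega), Nat.div_eq_of_lt h3, add_zero]
  rw [quads_cons (show x' ≠ 0 by omega) (by rw [hmod]; omega), hmod, hdiv, hdm]
  exact List.mem_cons_self

/-- In a quadruple `q = (x, x', y, y')`, the components are
`x = q.1`, `x' = q.2.1`, `y = q.2.2.1`, `y' = q.2.2.2`. -/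
theorem stmt_17 (n : ℕ) (hn : 2 ≤ n) :
    ∑ k ∈ Finset.Icc 1 (n / 2), euclidRemainderSum n k =
      (∑ q ∈ (Finset.range (n + 1) ×ˢ Finset.range (n + 1) ×ˢ
                Finset.range (n + 1) ×ˢ Finset.range (n + 1)).filter
          (fun q : ℕ × ℕ × ℕ × ℕ =>
            q.2.2.1 < q.1 ∧ 1 ≤ q.2.2.1 ∧ q.2.2.2 < q.2.1 ∧ 1 ≤ q.2.2.2 ∧
              Nat.gcd q.1 q.2.2.1 = 1 ∧ n = q.1 * q.2.1 + q.2.2.1 * q.2.2.2),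
          q.2.1)
        + ∑ k ∈ Finset.Icc 1 (n / 2), Nat.gcd n k := by
  have hIcc : ∀ k ∈ Finset.Icc 1 (n / 2), 1 ≤ k ∧ 2 * k ≤ n ∧ k < n := by
    intro k hk
    rw [Finset.mem_Icc] at hk
    have h2 : k * 2 ≤ n := (Nat.le_div_iff_mul_le (by omega)).mp hk.2
    exact ⟨hk.1, by omega, by omega⟩
  -- the big filtered set is the disjoint union of the quads lists
  have hset : (Finset.range (n + 1) ×ˢ Finset.range (n + 1) ×ˢ
                Finset.range (n + 1) ×ˢ Finset.range (n + 1)).filter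
          (fun q : ℕ × ℕ × ℕ × ℕ =>
            q.2.2.1 < q.1 ∧ 1 ≤ q.2.2.1 ∧ q.2.2.2 < q.2.1 ∧ 1 ≤ q.2.2.2 ∧
              Nat.gcd q.1 q.2.2.1 = 1 ∧ n = q.1 * q.2.1 + q.2.2.1 * q.2.2.2)
      = (Finset.Icc 1 (n / 2)).biUnion (fun k => (quads 1 0 n k).toFinset) := by
    ext q
    obtain ⟨X, x', Y, y'⟩ := q
    simp only [Finset.mem_filter, Finset.mem_biUnion, Finset.mem_product, Finset.mem_range,
      List.mem_toFinset]
    constructor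
    · rintro ⟨-, hp⟩
      obtain ⟨k, hk1, hk2, hkm⟩ := surj (show Pred n (X, x', Y, y') from hp)
      exact ⟨k, Finset.mem_Icc.mpr ⟨hk1, (Nat.le_div_iff_mul_le (by omega)).mpr (by omega)⟩, hkm⟩
    · rintro ⟨k, hk, hkm⟩
      obtain ⟨hk1, hk2, hk3⟩ := hIcc k hk
      have hp := pred_of_mem k n 1 0 (by simp) (by omega) (by omega) hk3
        (Or.inr (by omega)) _ hkm
      rw [show 1 * n + 0 * k = n by ring] at hp
      obtain ⟨h1, h2, h3, h4, h5, h6⟩ := hp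
      simp only at h1 h2 h3 h4 h5 h6
      have hX2 : X ≤ X * x' := Nat.le_mul_of_pos_right X (by omega)
      have hx'2 : x' ≤ X * x' := Nat.le_mul_of_pos_left x' (by omega)
      exact ⟨⟨by omega, by omega, by omega, by omega⟩, h1, h2, h3, h4, h5, h6⟩
  have hdisj : (↑(Finset.Icc 1 (n / 2)) : Set ℕ).PairwiseDisjoint
      (fun k => (quads 1 0 n k).toFinset) := by
    intro k hk k' hk' hne
    simp only [Finset.coe_Icc, Set.mem_Icc] at hk hk'
    refine Finset.disjoint_left.mpr fun q hq hq' => hne ?_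
    rw [List.mem_toFinset] at hq hq'
    have e1 := kOf_eq k n 1 0 (by omega) (by omega)
      (by have := (Nat.le_div_iff_mul_le (show 0 < 2 by omega)).mp hk.2; omega)
      (Or.inr (by have := (Nat.le_div_iff_mul_le (show 0 < 2 by omega)).mp hk.2; omega)) q hq
    have e2 := kOf_eq k' n 1 0 (by omega) (by omega)
      (by have := (Nat.le_div_iff_mul_le (show 0 < 2 by omega)).mp hk'.2; omega)
      (Or.inr (by have := (Nat.le_div_iff_mul_le (show 0 < 2 by omega)).mp hk'.2; omega)) q hq'
    rw [backk_init] at e1 e2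
    omega
  rw [hset, Finset.sum_biUnion hdisj]
  rw [← Finset.sum_add_distrib]
  apply Finset.sum_congr rfl
  intro k hk
  obtain ⟨hk1, hk2, hk3⟩ := hIcc k hk
  rw [List.sum_toFinset _ (nodup_quads k n 1 0)]
  exact (sum_quads k n 1 0 (by omega)).symm
end
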